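/- Let n be an odd natural number with n > 1, let m : ZMod n → ZMod n → ZMod n be the standard Cayley matrix of the cyclic group, m i j = i + j, and fix a cell (i₂, j₂) ∈ ZMod n × ZMod n. Then the number of pairs (i₁, j₁) with i₁ ≠ i₂ and j₁ ≠ j₂ such that i₂ + j₁ ≠ i₁ + j₂ and i₁ + j₁ ≠ i₂ + j₂ is exactly (n - 1) * (n - 3). (Hence the lower bound (n - 1)(n - 3) on the number of quadrangles satisfying (C3) cannot be improved in general.) -/
import Mathlib


/-- For the standard Cayley matrix `m i j = i + j` of the cyclic group `ZMod n`
with `n > 1` odd, the number of quadrangles at any fixed cell `(i₂, j₂)`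
satisfying (C3) is exactly `(n - 1) * (n - 3)`, so the general lower bound is
sharp. -/
theorem card_C3_quadrangles_cyclic_odd (n : ℕ) (hodd : Odd n) (hn : 1 < n)
    (i₂ j₂ : ZMod n) :
    {p : ZMod n × ZMod n | p.1 ≠ i₂ ∧ p.2 ≠ j₂ ∧
        i₂ + p.2 ≠ p.1 + j₂ ∧ p.1 + p.2 ≠ i₂ + j₂}.ncard
      = (n - 1) * (n - 3) := by
  haveI : NeZero n := ⟨by omega⟩
  classical
  -- key fact: a = -a → a = 0 in ZMod n with n odd
  have hkey : ∀ a : ZMod n, a = -a → a = 0 := by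
    intro a ha
    have h2 : (2 : ZMod n) * a = 0 := by
      have h : a + a = 0 := by nth_rewrite 2 [ha]; ring
      linear_combination h
    have hu : IsUnit (2 : ZMod n) := by
      have : ((2 : ℕ) : ZMod n) = (2 : ZMod n) := by norm_cast
      rw [← this, ZMod.isUnit_iff_coprime]
      exact Nat.coprime_two_left.mpr hodd
    exact (hu.mul_right_eq_zero).mp h2
  -- rewrite the set as a finset
  set T : Finset (ZMod n × ZMod n) :=
    Finset.univ.filter fun p => p.1 ≠ 0 ∧ p.2 ≠ 0 ∧ p.2 ≠ p.1 ∧ p.2 ≠ -p.1 with hT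
  have hset : {p : ZMod n × ZMod n | p.1 ≠ i₂ ∧ p.2 ≠ j₂ ∧
        i₂ + p.2 ≠ p.1 + j₂ ∧ p.1 + p.2 ≠ i₂ + j₂}
      = ↑(T.image fun p => (p.1 + i₂, p.2 + j₂)) := by
    ext ⟨x, y⟩
    simp only [Set.mem_setOf_eq, Finset.coe_image, Set.mem_image, Finset.mem_coe, hT,
      Finset.mem_filter, Finset.mem_univ, true_and, Prod.exists, Prod.mk.injEq]
    constructor
    · rintro ⟨h1, h2, h3, h4⟩
      refine ⟨x - i₂, y - j₂, ⟨?_, ?_, ?_, ?_⟩, by ring, by ring⟩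
      · intro h; apply h1; linear_combination h
      · intro h; apply h2; linear_combination h
      · intro h; apply h3; linear_combination h
      · intro h; apply h4; linear_combination h
    · rintro ⟨a, b, ⟨h1, h2, h3, h4⟩, rfl, rfl⟩
      refine ⟨?_, ?_, ?_, ?_⟩
      · intro h; apply h1; linear_combination h
      · intro h; apply h2; linear_combination h
      · intro h; apply h3; linear_combination h
      · intro h; apply h4; linear_combination h
  rw [hset, Set.ncard_coe_finset,
    Finset.card_image_of_injective _ (by intro p q h; simpa [Prod.ext_iff] using h)]
  -- now count T fiberwise
  have hfib := Finset.card_eq_sum_card_fiberwise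
    (f := Prod.fst) (s := T) (t := (Finset.univ : Finset (ZMod n)))
    (fun p _ => Finset.mem_univ _)
  rw [hfib]
  have hcard : Fintype.card (ZMod n) = n := ZMod.card n
  have hstep : ∀ a : ZMod n,
      (T.filter fun p => p.1 = a).card = if a = 0 then 0 else n - 3 := by
    intro a
    by_cases ha : a = 0
    · simp only [ha, if_true]
      rw [Finset.card_eq_zero, Finset.eq_empty_iff_forall_notMem]
      rintro ⟨x, y⟩ hx
      simp only [hT, Finset.mem_filter, Finset.mem_univ, true_and] at hx
      exact hx.1.1 hx.2
    · simp only [ha, if_false]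
      have himg : (T.filter fun p => p.1 = a)
          = (Finset.univ \ {0, a, -a}).image fun b => (a, b) := by
        ext ⟨x, y⟩
        simp only [hT, Finset.mem_filter, Finset.mem_univ, true_and, Finset.mem_image,
          Finset.mem_sdiff, Finset.mem_insert, Finset.mem_singleton, Prod.mk.injEq]
        constructor
        · rintro ⟨⟨h1, h2, h3, h4⟩, rfl⟩
          exact ⟨y, by tauto, rfl, rfl⟩
        · rintro ⟨b, hb, rfl, rfl⟩
          push_neg at hb
          exact ⟨⟨ha, hb.1, hb.2.1, hb.2.2⟩, rfl⟩
      rw [himg, Finset.card_image_of_injective _ (by intro p q h; simpa using h),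
        Finset.card_sdiff_of_subset (Finset.subset_univ _), Finset.card_univ, hcard]
      have h3 : ({0, a, -a} : Finset (ZMod n)).card = 3 := by
        rw [Finset.card_insert_of_notMem, Finset.card_insert_of_notMem,
          Finset.card_singleton]
        · simp only [Finset.mem_singleton]
          intro h; exact ha (hkey a h)
        · simp only [Finset.mem_insert, Finset.mem_singleton]
          push_neg
          exact ⟨fun h => ha h.symm, fun h => ha (neg_eq_zero.mp h.symm)⟩
      rw [h3]
  calc ∑ a : ZMod n, (T.filter fun p => p.1 = a).card
      = ∑ a : ZMod n, if a = 0 then 0 else n - 3 := by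
        exact Finset.sum_congr rfl fun a _ => hstep a
    _ = (n - 1) * (n - 3) := by
        rw [Finset.sum_ite, Finset.sum_const, Finset.sum_const]
        simp only [smul_eq_mul, mul_zero, zero_add]
        congr 1
        rw [Finset.filter_ne', Finset.card_erase_of_mem (Finset.mem_univ _),
          Finset.card_univ, hcard]
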